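/- The Fenchel conjugate of Ω_θ is the indicator function of the set {W : uᵀWv ≤ θ(u,v) for all (u,v)}. That is, Ω_θ*(W) = 0 if uᵀWv ≤ θ(u,v) for all u ∈ ℝ^D, v ∈ ℝ^N, and Ω_θ*(W) = +∞ otherwise. -/

import Mathlib

open Matrix Filter
open scoped ENNReal BigOperators

/-- The matrix factorization regularizer: infimum over all factorizations `X = U * Vᵀ`
(with a variable number `r` of columns) of the sum of `θ` applied to column pairs. -/
noncomputable def Omega {D N : ℕ} (θ : (Fin D → ℝ) → (Fin N → ℝ) → ℝ≥0∞)
    (X : Matrix (Fin D) (Fin N) ℝ) : ℝ≥0∞ :=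
  ⨅ (r : ℕ) (U : Matrix (Fin D) (Fin r) ℝ) (V : Matrix (Fin N) (Fin r) ℝ)
    (_ : U * Vᵀ = X), ∑ i : Fin r, θ (fun d => U d i) (fun n => V n i)

/-- `θ` is a rank-1 regularizer: positively homogeneous of degree 2, `θ(0,0) = 0`
(nonnegativity is automatic in `ℝ≥0∞`), and `θ(uₙ,vₙ) → ∞` whenever `‖uₙvₙᵀ‖_F → ∞`. -/
def IsRankOneReg {D N : ℕ} (θ : (Fin D → ℝ) → (Fin N → ℝ) → ℝ≥0∞) : Prop :=
  (∀ (α : ℝ), 0 ≤ α → ∀ u v, θ (α • u) (α • v) = ENNReal.ofReal (α ^ 2) * θ u v) ∧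
  (θ 0 0 = 0) ∧
  (∀ (u : ℕ → Fin D → ℝ) (v : ℕ → Fin N → ℝ),
    Tendsto (fun k => Real.sqrt (∑ d, ∑ m, (u k d * v k m) ^ 2)) atTop atTop →
    Tendsto (fun k => θ (u k) (v k)) atTop (nhds ⊤))

/-- The Frobenius (trace) inner product on matrices. -/
noncomputable def frobInner {D N : ℕ} (A B : Matrix (Fin D) (Fin N) ℝ) : ℝ :=
  ∑ d, ∑ n, A d n * B d n

lemma frob_mul {D N r : ℕ} (W : Matrix (Fin D) (Fin N) ℝ) (U : Matrix (Fin D) (Fin r) ℝ)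
    (V : Matrix (Fin N) (Fin r) ℝ) :
    frobInner W (U * Vᵀ) = ∑ i : Fin r, (fun d => U d i) ⬝ᵥ W *ᵥ (fun n => V n i) := by
  simp only [frobInner, Matrix.mul_apply, transpose_apply, dotProduct, mulVec,
    Finset.mul_sum, Finset.sum_mul]
  calc ∑ d, ∑ n, ∑ i, W d n * (U d i * V n i)
      = ∑ d, ∑ i, ∑ n, W d n * (U d i * V n i) :=
        Finset.sum_congr rfl fun d _ => Finset.sum_comm
    _ = ∑ i, ∑ d, ∑ n, W d n * (U d i * V n i) := Finset.sum_comm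
    _ = ∑ i, ∑ d, ∑ n, U d i * (W d n * V n i) :=
        Finset.sum_congr rfl fun i _ => Finset.sum_congr rfl fun d _ =>
          Finset.sum_congr rfl fun n _ => by ring

lemma coe_ennreal_sum' {ι : Type*} (s : Finset ι) (f : ι → ℝ≥0∞) :
    ((∑ i ∈ s, f i : ℝ≥0∞) : EReal) = ∑ i ∈ s, (f i : EReal) :=
  map_sum (⟨⟨(↑), EReal.coe_ennreal_zero⟩, EReal.coe_ennreal_add⟩ : ℝ≥0∞ →+ EReal) f s

lemma coe_real_sum' {ι : Type*} (s : Finset ι) (f : ι → ℝ) :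
    ((∑ i ∈ s, f i : ℝ) : EReal) = ∑ i ∈ s, (f i : EReal) :=
  map_sum (⟨⟨(↑), EReal.coe_zero⟩, EReal.coe_add⟩ : ℝ →+ EReal) f s

lemma Omega_zero {D N : ℕ} (θ : (Fin D → ℝ) → (Fin N → ℝ) → ℝ≥0∞) :
    Omega θ (0 : Matrix (Fin D) (Fin N) ℝ) = 0 := by
  refine le_antisymm ?_ zero_le
  have h : (0 : Matrix (Fin D) (Fin 0) ℝ) * (0 : Matrix (Fin N) (Fin 0) ℝ)ᵀ = 0 := by
    ext d n; simp [Matrix.mul_apply]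
  calc Omega θ 0 ≤ ∑ i : Fin 0, θ (fun d => (0 : Matrix (Fin D) (Fin 0) ℝ) d i)
        (fun n => (0 : Matrix (Fin N) (Fin 0) ℝ) n i) :=
      iInf_le_of_le 0 (iInf_le_of_le 0 (iInf_le_of_le 0 (iInf_le_of_le h le_rfl)))
    _ = 0 := by simp

/-- The Fenchel conjugate of `Ω_θ` is the indicator function of
`{W : uᵀWv ≤ θ(u,v) ∀(u,v)}`. -/
theorem omega_fenchel_conjugate {D N : ℕ} (θ : (Fin D → ℝ) → (Fin N → ℝ) → ℝ≥0∞)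
    (hθ : IsRankOneReg θ) (W : Matrix (Fin D) (Fin N) ℝ) :
    ((∀ (u : Fin D → ℝ) (v : Fin N → ℝ), ((u ⬝ᵥ W *ᵥ v : ℝ) : EReal) ≤ (θ u v : EReal)) →
      (⨆ X : Matrix (Fin D) (Fin N) ℝ,
        ((frobInner W X : ℝ) : EReal) - ((Omega θ X : ℝ≥0∞) : EReal)) = 0) ∧
    ((¬ ∀ (u : Fin D → ℝ) (v : Fin N → ℝ), ((u ⬝ᵥ W *ᵥ v : ℝ) : EReal) ≤ (θ u v : EReal)) →
      (⨆ X : Matrix (Fin D) (Fin N) ℝ,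
        ((frobInner W X : ℝ) : EReal) - ((Omega θ X : ℝ≥0∞) : EReal)) = ⊤) := by
  constructor
  · -- feasible case
    intro h
    apply le_antisymm
    · apply iSup_le
      intro X
      have key : ((frobInner W X : ℝ) : EReal) ≤ ((Omega θ X : ℝ≥0∞) : EReal) := by
        by_contra hc
        push_neg at hc
        have h0 : (0 : ℝ) ≤ frobInner W X := by
          have h0' : (0 : EReal) ≤ ((frobInner W X : ℝ) : EReal) :=
            (EReal.coe_ennreal_nonneg _).trans hc.le
          exact_mod_cast h0'
        have hcoe : ((ENNReal.ofReal (frobInner W X) : ℝ≥0∞) : EReal)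
            = ((frobInner W X : ℝ) : EReal) := by
          rw [EReal.coe_ennreal_ofReal, max_eq_left h0]
        have hlt : Omega θ X < ENNReal.ofReal (frobInner W X) := by
          rw [← EReal.coe_ennreal_lt_coe_ennreal_iff, hcoe]
          exact hc
        simp only [Omega, iInf_lt_iff] at hlt
        obtain ⟨r, U, V, hUV, hsum⟩ := hlt
        have h1 : ((frobInner W X : ℝ) : EReal)
            ≤ ((∑ i : Fin r, θ (fun d => U d i) (fun n => V n i) : ℝ≥0∞) : EReal) := by
          rw [← hUV, frob_mul, coe_real_sum', coe_ennreal_sum']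
          exact Finset.sum_le_sum fun i _ => h _ _
        have h2 : ((∑ i : Fin r, θ (fun d => U d i) (fun n => V n i) : ℝ≥0∞) : EReal)
            < ((frobInner W X : ℝ) : EReal) := by
          rw [← hcoe]
          exact EReal.coe_ennreal_lt_coe_ennreal_iff.2 hsum
        exact absurd (h1.trans_lt h2) (lt_irrefl _)
      rcases eq_or_ne (Omega θ X) ⊤ with ht | ht
      · rw [ht, EReal.coe_ennreal_top, EReal.sub_top]
        exact bot_le
      · have hΩ : ((Omega θ X : ℝ≥0∞) : EReal) = (((Omega θ X).toReal : ℝ) : EReal) := by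
          conv_lhs => rw [← ENNReal.ofReal_toReal ht]
          rw [EReal.coe_ennreal_ofReal, max_eq_left ENNReal.toReal_nonneg]
        rw [hΩ] at key ⊢
        calc ((frobInner W X : ℝ) : EReal) - (((Omega θ X).toReal : ℝ) : EReal)
            ≤ (((Omega θ X).toReal : ℝ) : EReal) - (((Omega θ X).toReal : ℝ) : EReal) :=
              EReal.sub_le_sub key le_rfl
          _ = 0 := by rw [← EReal.coe_sub, sub_self, EReal.coe_zero]
    · refine le_trans ?_ (le_iSup _ (0 : Matrix (Fin D) (Fin N) ℝ))
      have h1 : frobInner W (0 : Matrix (Fin D) (Fin N) ℝ) = 0 := by simp [frobInner]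
      rw [h1, Omega_zero]
      simp
  · -- infeasible case
    intro h
    push_neg at h
    obtain ⟨u, v, huv⟩ := h
    set c : ℝ := u ⬝ᵥ W *ᵥ v with hc
    have hne : θ u v ≠ ⊤ := by
      intro ht
      rw [ht, EReal.coe_ennreal_top] at huv
      exact not_top_lt (huv.trans_le le_top)
    set t : ℝ := (θ u v).toReal with htdef
    have hcoet : ((θ u v : ℝ≥0∞) : EReal) = ((t : ℝ) : EReal) := by
      conv_lhs => rw [← ENNReal.ofReal_toReal hne]
      rw [EReal.coe_ennreal_ofReal, max_eq_left ENNReal.toReal_nonneg]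
    have htc : t < c := by
      rw [hcoet] at huv
      exact_mod_cast huv
    rw [iSup_eq_top]
    intro b hb
    obtain ⟨M, hM⟩ : ∃ M : ℝ, b < (M : EReal) := by
      induction b using EReal.rec with
      | bot => exact ⟨0, EReal.bot_lt_coe 0⟩
      | coe x => exact ⟨x + 1, EReal.coe_lt_coe_iff.2 (lt_add_one x)⟩
      | top => exact absurd hb (lt_irrefl _)
    obtain ⟨k, hk⟩ := exists_nat_gt (max (M / (c - t)) 1)
    have hk1 : (1 : ℝ) ≤ (k : ℝ) := le_of_lt (lt_of_le_of_lt (le_max_right _ _) hk)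
    have hpos : (0 : ℝ) < c - t := sub_pos.2 htc
    have hkM : M < (k : ℝ) * (c - t) :=
      (div_lt_iff₀ hpos).1 (lt_of_le_of_lt (le_max_left _ _) hk)
    have hkk : (k : ℝ) ≤ (k : ℝ) ^ 2 := by nlinarith
    have hk2 : M < (k : ℝ) ^ 2 * (c - t) :=
      hkM.trans_le (mul_le_mul_of_nonneg_right hkk hpos.le)
    set U : Matrix (Fin D) (Fin 1) ℝ := Matrix.of fun d _ => (k : ℝ) * u d with hU
    set V : Matrix (Fin N) (Fin 1) ℝ := Matrix.of fun n _ => (k : ℝ) * v n with hV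
    refine ⟨U * Vᵀ, ?_⟩
    have hcolU : (fun d => U d 0) = (k : ℝ) • u := by
      funext d; simp [hU, Pi.smul_apply, smul_eq_mul]
    have hcolV : (fun n => V n 0) = (k : ℝ) • v := by
      funext n; simp [hV, Pi.smul_apply, smul_eq_mul]
    have hΩ : Omega θ (U * Vᵀ) ≤ ENNReal.ofReal ((k : ℝ) ^ 2) * θ u v := by
      have hstep : Omega θ (U * Vᵀ)
          ≤ ∑ i : Fin 1, θ (fun d => U d i) (fun n => V n i) :=
        iInf_le_of_le (1 : ℕ) (iInf_le_of_le U (iInf_le_of_le V (iInf_le_of_le rfl le_rfl)))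
      calc Omega θ (U * Vᵀ) ≤ ∑ i : Fin 1, θ (fun d => U d i) (fun n => V n i) := hstep
        _ = θ ((k : ℝ) • u) ((k : ℝ) • v) := by rw [Fin.sum_univ_one, hcolU, hcolV]
        _ = ENNReal.ofReal ((k : ℝ) ^ 2) * θ u v :=
          hθ.1 (k : ℝ) (by positivity) u v
    have hfrob : frobInner W (U * Vᵀ) = (k : ℝ) ^ 2 * c := by
      rw [frob_mul, Fin.sum_univ_one, hcolU, hcolV]
      rw [smul_dotProduct, mulVec_smul, dotProduct_smul, smul_eq_mul, smul_eq_mul]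
      ring
    have hcoeΩ : ((Omega θ (U * Vᵀ) : ℝ≥0∞) : EReal) ≤ (((k : ℝ) ^ 2 * t : ℝ) : EReal) := by
      have h1 : ((Omega θ (U * Vᵀ) : ℝ≥0∞) : EReal)
          ≤ ((ENNReal.ofReal ((k : ℝ) ^ 2) * θ u v : ℝ≥0∞) : EReal) :=
        EReal.coe_ennreal_le_coe_ennreal_iff.2 hΩ
      have h2 : (ENNReal.ofReal ((k : ℝ) ^ 2) * θ u v : ℝ≥0∞)
          = ENNReal.ofReal ((k : ℝ) ^ 2 * t) := by
        conv_lhs => rw [← ENNReal.ofReal_toReal hne]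
        rw [← ENNReal.ofReal_mul (by positivity)]
      rw [h2, EReal.coe_ennreal_ofReal] at h1
      exact h1.trans (max_le le_rfl (EReal.coe_nonneg.2 (by positivity)))
    calc b < ((M : ℝ) : EReal) := hM
      _ ≤ (((k : ℝ) ^ 2 * (c - t) : ℝ) : EReal) := EReal.coe_le_coe_iff.2 hk2.le
      _ = (((k : ℝ) ^ 2 * c : ℝ) : EReal) - (((k : ℝ) ^ 2 * t : ℝ) : EReal) := by
          rw [← EReal.coe_sub]; norm_cast; ring
      _ ≤ ((frobInner W (U * Vᵀ) : ℝ) : EReal) - ((Omega θ (U * Vᵀ) : ℝ≥0∞) : EReal) := by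
          rw [hfrob]
          exact EReal.sub_le_sub le_rfl hcoeΩ
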